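/- Let B be a smooth manifold, let C ⊆ B be a closed subset, let λ : B → ℝ be smooth with −1 < λ(p) ≤ 1 for all p, and let Z = {(p,x) ∈ B × (−1,1) : p ∈ C and x ≥ λ(p)} (the epigraph of λ over C). Then there exists a smooth function v : B × (−1,1) → [0,∞) such that: (i) the maximal solution of γ' = v(p, γ), γ(0) = x, valued in (−1,1), is defined at least on [0,1] if and only if (p,x) ∉ Z, and is defined on (−∞, 0] for every (p,x); and (ii) the time-1 flow map of the vector field v(p,x) ∂/∂x, namely Ψ(p,x) = (p, γ_{p,x}(1)), is a diffeomorphism from (B × (−1,1)) ∖ Z onto B × (−1,1) that preserves the B-coordinate (hence a presymplectomorphism for any presymplectic form on B × (−1,1) pulled back from B). -/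

import Mathlib

open Set Manifold

noncomputable section

namespace TOFAux

/-- time parameter along the flow in the `u = (1+x)/(1-x)` coordinate -/
def tau (a b x t : ℝ) : ℝ := b * ((1 + x) / (1 - x)) - (1 - x) / (1 + x) + a * t

def sfn (a b x t : ℝ) : ℝ := Real.sqrt (tau a b x t ^ 2 + 4 * b)

def wfn (a b x t : ℝ) : ℝ := sfn a b x t - tau a b x t

/-- explicit flow -/
def flw (a b x t : ℝ) : ℝ := (2 - wfn a b x t) / (2 + wfn a b x t)

/-- the vector field -/
def vf (a b y : ℝ) : ℝ := a * (1 + y) ^ 2 * (1 - y) ^ 2 / (2 * ((1 - y) ^ 2 + b * (1 + y) ^ 2))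

def av (lv : ℝ) : ℝ := (1 - lv) / (1 + lv)

lemma vf_nonneg {a b y : ℝ} (ha : 0 ≤ a) (hb : 0 ≤ b) : 0 ≤ vf a b y := by
  rw [vf]
  apply div_nonneg
  · exact mul_nonneg (mul_nonneg ha (sq_nonneg _)) (sq_nonneg _)
  · nlinarith [sq_nonneg (1 - y), sq_nonneg (1 + y), mul_nonneg hb (sq_nonneg (1 + y))]

def Vmap (r : ℝ × ℝ × ℝ) : ℝ := vf (av r.1) r.2.1 r.2.2

def Gmap (t0 : ℝ) (r : ℝ × ℝ × ℝ) : ℝ := flw (av r.1) r.2.1 r.2.2 t0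

variable {a b x t t' : ℝ}

lemma rad_pos (hb : 0 ≤ b) (h : 0 < b ∨ tau a b x t < 0) :
    0 < tau a b x t ^ 2 + 4 * b := by
  rcases h with h | h
  · nlinarith [sq_nonneg (tau a b x t)]
  · have : 0 < tau a b x t ^ 2 := by nlinarith
    linarith

lemma sfn_pos (hb : 0 ≤ b) (h : 0 < b ∨ tau a b x t < 0) : 0 < sfn a b x t :=
  Real.sqrt_pos.2 (rad_pos hb h)

lemma sfn_sq (hb : 0 ≤ b) : sfn a b x t ^ 2 = tau a b x t ^ 2 + 4 * b := by
  rw [sfn, Real.sq_sqrt]; nlinarith [sq_nonneg (tau a b x t)]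

lemma wfn_pos (hb : 0 ≤ b) (h : 0 < b ∨ tau a b x t < 0) : 0 < wfn a b x t := by
  rcases h with h | h
  · have h1 : |tau a b x t| < sfn a b x t := by
      rw [sfn, ← Real.sqrt_sq_eq_abs]
      exact Real.sqrt_lt_sqrt (sq_nonneg _) (by linarith)
    have := abs_nonneg (tau a b x t)
    have := le_abs_self (tau a b x t)
    simp only [wfn]; linarith
  · have : 0 ≤ sfn a b x t := Real.sqrt_nonneg _
    simp only [wfn]; linarith

lemma flw_mem (hb : 0 ≤ b) (h : 0 < b ∨ tau a b x t < 0) :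
    flw a b x t ∈ Ioo (-1 : ℝ) 1 := by
  have hw := wfn_pos hb h
  constructor
  · rw [flw, lt_div_iff₀ (by linarith)]; linarith
  · rw [flw, div_lt_one (by linarith)]; linarith

lemma tau_mono (ha : 0 ≤ a) (htt : t ≤ t') : tau a b x t ≤ tau a b x t' := by
  simp only [tau]; nlinarith

lemma flw_zero (hx : x ∈ Ioo (-1 : ℝ) 1) (hb : 0 ≤ b) : flw a b x 0 = x := by
  obtain ⟨hx1, hx2⟩ := hx
  have h1 : (0:ℝ) < 1 - x := by linarith
  have h2 : (0:ℝ) < 1 + x := by linarith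
  have hs : sfn a b x 0 = b * ((1 + x) / (1 - x)) + (1 - x) / (1 + x) := by
    rw [sfn, show tau a b x 0 ^ 2 + 4 * b
        = (b * ((1 + x) / (1 - x)) + (1 - x) / (1 + x)) ^ 2 by
      rw [tau]; field_simp; ring]
    exact Real.sqrt_sq (by positivity)
  have hw : wfn a b x 0 = 2 * ((1 - x) / (1 + x)) := by
    rw [wfn, hs, tau]; ring
  rw [flw, hw]
  rw [div_eq_iff (by positivity)]
  field_simp
  ring


lemma one_add_flw (h : 0 < wfn a b x t) : 1 + flw a b x t = 4 / (2 + wfn a b x t) := by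
  rw [flw]; field_simp; ring

lemma one_sub_flw (h : 0 < wfn a b x t) :
    1 - flw a b x t = 2 * wfn a b x t / (2 + wfn a b x t) := by
  rw [flw]; field_simp; ring

lemma wfn_key (hb : 0 ≤ b) :
    wfn a b x t ^ 2 + 4 * b = 2 * sfn a b x t * wfn a b x t := by
  have := sfn_sq (a := a) (x := x) (t := t) hb
  simp only [wfn] at *; nlinarith

lemma vf_flw (hb : 0 ≤ b) (h : 0 < b ∨ tau a b x t < 0) :
    vf a b (flw a b x t) =
      4 * a * wfn a b x t / (sfn a b x t * (2 + wfn a b x t) ^ 2) := by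
  have hw := wfn_pos hb h
  have hs := sfn_pos hb h
  have hkey := wfn_key (a := a) (x := x) (t := t) hb
  have h2w : (0:ℝ) < 2 + wfn a b x t := by linarith
  have hden : (1 - flw a b x t) ^ 2 + b * (1 + flw a b x t) ^ 2
      = 8 * sfn a b x t * wfn a b x t / (2 + wfn a b x t) ^ 2 := by
    rw [one_sub_flw hw, one_add_flw hw]
    field_simp
    linear_combination (4:ℝ) * hkey
  rw [vf, hden, one_add_flw hw, one_sub_flw hw]
  field_simp
  ring

lemma hasDerivAt_flw (ha : 0 ≤ a) (hb : 0 ≤ b)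
    (h : 0 < b ∨ tau a b x t < 0) :
    HasDerivAt (flw a b x) (vf a b (flw a b x t)) t := by
  have hrad := rad_pos hb h
  have hs := sfn_pos hb h
  have hw := wfn_pos hb h
  have htau : HasDerivAt (tau a b x) a t := by
    have := ((hasDerivAt_id t).const_mul a).const_add
      (b * ((1 + x) / (1 - x)) - (1 - x) / (1 + x))
    rw [mul_one] at this
    exact this
  have hrad' : HasDerivAt (fun t => tau a b x t ^ 2 + 4 * b)
      (2 * tau a b x t * a) t := by
    simpa [mul_comm] using ((htau.pow 2).add_const (4 * b))
  have hsder : HasDerivAt (fun t => sfn a b x t)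
      (1 / (2 * sfn a b x t) * (2 * tau a b x t * a)) t := by
    simpa [sfn, Function.comp_def] using (Real.hasDerivAt_sqrt hrad.ne').comp t hrad'
  have hwder : HasDerivAt (fun t => wfn a b x t)
      (1 / (2 * sfn a b x t) * (2 * tau a b x t * a) - a) t := hsder.sub htau
  have hfl : HasDerivAt (flw a b x)
      (((-(1 / (2 * sfn a b x t) * (2 * tau a b x t * a) - a)) * (2 + wfn a b x t)
          - (2 - wfn a b x t) * (1 / (2 * sfn a b x t) * (2 * tau a b x t * a) - a))
        / (2 + wfn a b x t) ^ 2) t := by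
    have := ((hasDerivAt_const t 2).sub hwder).div ((hasDerivAt_const t 2).add hwder)
      (by linarith : (2 : ℝ) + wfn a b x t ≠ 0)
    show HasDerivAt (((fun _ => 2) - fun t => wfn a b x t) / ((fun _ => 2) + fun t => wfn a b x t)) _ t
    refine HasDerivAt.congr_deriv this ?_
    simp only [Pi.add_apply, Pi.sub_apply]; ring
  convert hfl using 1
  rw [vf_flw hb h]
  have e1 : sfn a b x t = wfn a b x t + tau a b x t := by rw [wfn]; ring
  have h1 : 0 < wfn a b x t + tau a b x t := e1 ▸ hs
  rw [e1]
  field_simp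
  ring


lemma tau_flw (hb : 0 ≤ b) (h : 0 < b ∨ tau a b x t < 0) :
    tau a b (flw a b x t) t' = tau a b x (t + t') := by
  have hw := wfn_pos hb h
  have hs := sfn_pos hb h
  have hkey := wfn_key (a := a) (x := x) (t := t) hb
  have h2w : (0:ℝ) < 2 + wfn a b x t := by linarith
  have e1 : (1 + flw a b x t) / (1 - flw a b x t) = 2 / wfn a b x t := by
    have h2w' : (2:ℝ) + wfn a b x t ≠ 0 := by linarith
    rw [one_add_flw hw, one_sub_flw hw]
    field_simp
    ring
  have e2 : (1 - flw a b x t) / (1 + flw a b x t) = wfn a b x t / 2 := by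
    have h2w' : (2:ℝ) + wfn a b x t ≠ 0 := by linarith
    rw [one_add_flw hw, one_sub_flw hw]
    field_simp
    ring
  rw [tau, e1, e2]
  have e3 : b * (2 / wfn a b x t) - wfn a b x t / 2 = tau a b x t := by
    have e4 : sfn a b x t = wfn a b x t + tau a b x t := by rw [wfn]; ring
    rw [e4] at hkey
    field_simp
    linarith [hkey]
  rw [e3]
  rw [tau, tau]
  ring

lemma flw_flw (hb : 0 ≤ b) (h : 0 < b ∨ tau a b x t < 0) :
    flw a b (flw a b x t) t' = flw a b x (t + t') := by
  have h1 := tau_flw (a := a) (b := b) (x := x) (t := t) (t' := t') hb h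
  simp only [flw, wfn, sfn] at h1 ⊢
  rw [h1]

lemma flw_b0 (h : tau a 0 x t < 0) :
    flw a 0 x t = (1 + tau a 0 x t) / (1 - tau a 0 x t) := by
  have hs : sfn a 0 x t = -tau a 0 x t := by
    rw [sfn]
    rw [show tau a 0 x t ^ 2 + 4 * 0 = (-tau a 0 x t) ^ 2 by ring]
    exact Real.sqrt_sq (by linarith)
  have hne : (0:ℝ) < 1 - tau a 0 x t := by linarith
  rw [flw, wfn, hs]
  rw [div_eq_div_iff (by linarith) (by linarith)]
  ring


/-- Points in the epigraph cannot flow for time 1 inside `(-1,1)`. -/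
lemma no_sol {x lp : ℝ} (hx : x ∈ Ioo (-1:ℝ) 1) (hlp : -1 < lp) (hle : lp ≤ x)
    {g : ℝ → ℝ} (hg0 : g 0 = x)
    (hg : ∀ t ∈ Icc (0:ℝ) 1, g t ∈ Ioo (-1:ℝ) 1 ∧ HasDerivAt g (vf (av lp) 0 (g t)) t) :
    False := by
  have hlp1 : (0:ℝ) < 1 + lp := by linarith
  set F : ℝ → ℝ := fun t => (g t - 1) / (g t + 1) - av lp * t with hF_def
  have hF : ∀ t ∈ Icc (0:ℝ) 1, HasDerivAt F 0 t := by
    intro t ht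
    obtain ⟨⟨h1, h2⟩, hder⟩ := hg t ht
    have hne : g t + 1 ≠ 0 := by linarith
    have hdiv : HasDerivAt (fun t => (g t - 1) / (g t + 1))
        ((vf (av lp) 0 (g t) * (g t + 1) - (g t - 1) * vf (av lp) 0 (g t)) / (g t + 1) ^ 2) t :=
      (hder.sub_const 1).div (hder.add_const 1) hne
    have h3 := hdiv.sub ((hasDerivAt_id t).const_mul (av lp))
    refine h3.congr_deriv (Eq.symm ?_)
    rw [vf]
    have hne2 : (1:ℝ) - g t ≠ 0 := by linarith
    field_simp
    ring
  have hcont : ContinuousOn F (Icc 0 1) :=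
    fun t ht => (hF t ht).continuousAt.continuousWithinAt
  obtain ⟨c, _, hceq⟩ := exists_hasDerivAt_eq_slope F (fun _ => 0) one_pos hcont
    (fun t ht => hF t (Ioo_subset_Icc_self ht))
  have hF1 : F 1 = F 0 := by
    have : (0:ℝ) = (F 1 - F 0) / (1 - 0) := hceq
    field_simp at this
    linarith
  obtain ⟨hg1a, hg1b⟩ := (hg 1 (by constructor <;> norm_num)).1
  have hx1 : (0:ℝ) < 1 + x := by linarith [hx.1]
  have e0 : F 0 = (x - 1) / (x + 1) := by simp [hF_def, hg0]
  have e1 : F 1 = (g 1 - 1) / (g 1 + 1) - av lp := by simp [hF_def]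
  have hneg : (g 1 - 1) / (g 1 + 1) < 0 :=
    div_neg_of_neg_of_pos (by linarith) (by linarith)
  have hmain : (x - 1) / (x + 1) + av lp ≥ 0 := by
    rw [av, div_add_div _ _ (by linarith : x + 1 ≠ 0) (by linarith : (1:ℝ) + lp ≠ 0)]
    apply div_nonneg
    · nlinarith
    · nlinarith
  rw [e1, e0] at hF1
  linarith

lemma contDiffAt_arith {r : ℝ × ℝ × ℝ} :
    ContDiffAt ℝ (⊤ : ℕ∞) (fun r : ℝ × ℝ × ℝ => r.1) r ∧
    ContDiffAt ℝ (⊤ : ℕ∞) (fun r : ℝ × ℝ × ℝ => r.2.1) r ∧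
    ContDiffAt ℝ (⊤ : ℕ∞) (fun r : ℝ × ℝ × ℝ => r.2.2) r :=
  ⟨contDiffAt_fst, contDiffAt_fst.comp r contDiffAt_snd,
    contDiffAt_snd.comp r contDiffAt_snd⟩

lemma contDiffAt_av {r : ℝ × ℝ × ℝ} (h1 : -1 < r.1) :
    ContDiffAt ℝ (⊤ : ℕ∞) (fun r : ℝ × ℝ × ℝ => av r.1) r := by
  obtain ⟨c1, c2, c3⟩ := contDiffAt_arith (r := r)
  exact (contDiffAt_const.sub c1).div (contDiffAt_const.add c1) (by dsimp; linarith)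

lemma contDiffAt_Vmap {r : ℝ × ℝ × ℝ} (h1 : -1 < r.1) (hb : 0 ≤ r.2.1)
    (hx2 : r.2.2 < 1) : ContDiffAt ℝ (⊤ : ℕ∞) Vmap r := by
  obtain ⟨c1, c2, c3⟩ := contDiffAt_arith (r := r)
  have hden : 2 * ((1 - r.2.2) ^ 2 + r.2.1 * (1 + r.2.2) ^ 2) ≠ 0 := by
    have h2 : (0:ℝ) < (1 - r.2.2) ^ 2 := by nlinarith
    nlinarith [mul_nonneg hb (sq_nonneg (1 + r.2.2))]
  show ContDiffAt ℝ (⊤ : ℕ∞) (fun r : ℝ × ℝ × ℝ => av r.1 * (1 + r.2.2) ^ 2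
      * (1 - r.2.2) ^ 2 / (2 * ((1 - r.2.2) ^ 2 + r.2.1 * (1 + r.2.2) ^ 2))) r
  exact (((contDiffAt_av h1).mul ((contDiffAt_const.add c3).pow 2)).mul
      ((contDiffAt_const.sub c3).pow 2)).div
      (contDiffAt_const.mul (((contDiffAt_const.sub c3).pow 2).add
        (c2.mul ((contDiffAt_const.add c3).pow 2)))) hden

lemma contDiffAt_tau {r : ℝ × ℝ × ℝ} (t0 : ℝ) (h1 : -1 < r.1)
    (hx : r.2.2 ∈ Ioo (-1:ℝ) 1) :
    ContDiffAt ℝ (⊤ : ℕ∞) (fun r : ℝ × ℝ × ℝ => tau (av r.1) r.2.1 r.2.2 t0) r := by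
  obtain ⟨c1, c2, c3⟩ := contDiffAt_arith (r := r)
  obtain ⟨hxa, hxb⟩ := hx
  simp only [tau]
  exact ((c2.mul ((contDiffAt_const.add c3).div (contDiffAt_const.sub c3)
      (by dsimp; linarith))).sub
      (((contDiffAt_const.sub c3).div (contDiffAt_const.add c3) (by dsimp; linarith)))).add
    ((contDiffAt_av h1).mul contDiffAt_const)

lemma contDiffAt_Gmap {r : ℝ × ℝ × ℝ} (t0 : ℝ) (h1 : -1 < r.1) (hb : 0 ≤ r.2.1)
    (hx : r.2.2 ∈ Ioo (-1:ℝ) 1)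
    (hP : 0 < r.2.1 ∨ tau (av r.1) r.2.1 r.2.2 t0 < 0) :
    ContDiffAt ℝ (⊤ : ℕ∞) (Gmap t0) r := by
  obtain ⟨c1, c2, c3⟩ := contDiffAt_arith (r := r)
  have hrad := rad_pos hb hP
  have hw := wfn_pos hb hP
  have ctau := contDiffAt_tau t0 h1 hx
  have crad : ContDiffAt ℝ (⊤ : ℕ∞)
      (fun r : ℝ × ℝ × ℝ => tau (av r.1) r.2.1 r.2.2 t0 ^ 2 + 4 * r.2.1) r :=
    (ctau.pow 2).add (contDiffAt_const.mul c2)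
  have csqrt : ContDiffAt ℝ (⊤ : ℕ∞)
      (fun r : ℝ × ℝ × ℝ => Real.sqrt (tau (av r.1) r.2.1 r.2.2 t0 ^ 2 + 4 * r.2.1)) r :=
    (Real.contDiffAt_sqrt hrad.ne').comp r crad
  have cw : ContDiffAt ℝ (⊤ : ℕ∞)
      (fun r : ℝ × ℝ × ℝ => wfn (av r.1) r.2.1 r.2.2 t0) r := by
    simp only [wfn, sfn]
    exact csqrt.sub ctau
  show ContDiffAt ℝ (⊤ : ℕ∞) (fun r : ℝ × ℝ × ℝ => (2 - wfn (av r.1) r.2.1 r.2.2 t0)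
      / (2 + wfn (av r.1) r.2.1 r.2.2 t0)) r
  exact (contDiffAt_const.sub cw).div (contDiffAt_const.add cw) (by dsimp; linarith)

end TOFAux

open TOFAux

/-- Let `B` be a smooth manifold, `C ⊆ B` closed, `l : B → ℝ` smooth with values in
`(-1,1]`, and `Z = {(p,x) : p ∈ C, x ≥ l p}` the epigraph of `l` over `C` inside
`B × (-1,1)`.  Then there is a smooth `v : B × (-1,1) → [0,∞)` such that the maximal
solutions of `γ' = v(p,γ)` valued in `(-1,1)` are defined at least on `[0,1]` exactly
when the starting point is not in `Z`, are defined on `(-∞,0]` everywhere, and the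
time-1 flow map `Ψ(p,x) = (p, γ_{p,x}(1))` is a diffeomorphism from
`(B × (-1,1)) ∖ Z` onto `B × (-1,1)` preserving the `B`-coordinate. -/
theorem time_one_flow_excises_epigraph
    {E : Type*} [NormedAddCommGroup E] [NormedSpace ℝ E] [FiniteDimensional ℝ E]
    {H : Type*} [TopologicalSpace H] (I : ModelWithCorners ℝ E H) [I.Boundaryless]
    {B : Type*} [TopologicalSpace B] [ChartedSpace H B]
    [IsManifold I (⊤ : ℕ∞) B] [T2Space B] [SecondCountableTopology B]
    (C : Set B) (hC : IsClosed C)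
    (l : B → ℝ) (hl : ContMDiff I 𝓘(ℝ, ℝ) (⊤ : ℕ∞) l)
    (hl_range : ∀ p, l p ∈ Ioc (-1 : ℝ) 1)
    (D : Set (B × ℝ)) (hD : D = univ ×ˢ Ioo (-1 : ℝ) 1)
    (Z : Set (B × ℝ)) (hZ : Z = {q ∈ D | q.1 ∈ C ∧ l q.1 ≤ q.2}) :
    ∃ v : B × ℝ → ℝ,
      ContMDiffOn (I.prod 𝓘(ℝ, ℝ)) 𝓘(ℝ, ℝ) (⊤ : ℕ∞) v D ∧
      (∀ q ∈ D, 0 ≤ v q) ∧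
      -- (i) defined at least on [0,1] iff not in Z; defined on (-∞, 0] everywhere
      (∀ q ∈ D,
        ((∃ γ : ℝ → ℝ, γ 0 = q.2 ∧
            ∀ t ∈ Icc (0:ℝ) 1, γ t ∈ Ioo (-1 : ℝ) 1 ∧ HasDerivAt γ (v (q.1, γ t)) t)
          ↔ q ∉ Z)) ∧
      (∀ q ∈ D, ∀ T : ℝ, 0 < T →
        ∃ γ : ℝ → ℝ, γ 0 = q.2 ∧
          ∀ t ∈ Icc (-T) 0, γ t ∈ Ioo (-1 : ℝ) 1 ∧ HasDerivAt γ (v (q.1, γ t)) t) ∧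
      -- (ii) the time-1 flow map Ψ(p,x) = (p, γ_{p,x}(1)) is a diffeomorphism
      --      from D ∖ Z onto D, preserving the B-coordinate
      ∃ g : B × ℝ → ℝ,
        (∀ q ∈ D \ Z, ∃ γ : ℝ → ℝ, γ 0 = q.2 ∧
          (∀ t ∈ Icc (0:ℝ) 1, γ t ∈ Ioo (-1 : ℝ) 1 ∧ HasDerivAt γ (v (q.1, γ t)) t) ∧
          γ 1 = g q) ∧
        ContMDiffOn (I.prod 𝓘(ℝ, ℝ)) (I.prod 𝓘(ℝ, ℝ)) (⊤ : ℕ∞)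
          (fun q : B × ℝ => (q.1, g q)) (D \ Z) ∧
        BijOn (fun q : B × ℝ => (q.1, g q)) (D \ Z) D ∧
        (∃ Ψ' : B × ℝ → B × ℝ,
          ContMDiffOn (I.prod 𝓘(ℝ, ℝ)) (I.prod 𝓘(ℝ, ℝ)) (⊤ : ℕ∞) Ψ' D ∧
          InvOn Ψ' (fun q : B × ℝ => (q.1, g q)) (D \ Z) D) := by
  haveI : LocallyCompactSpace B := Manifold.locallyCompact_of_finiteDimensional I
  obtain ⟨f, hf_sm, hf_range, hf_zero, -⟩ :=
    exists_contMDiff_zero_iff_one_iff_of_isClosed (n := ⊤) I hC isClosed_empty (disjoint_empty C)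
  -- basic facts
  have hl1 : ∀ p, -1 < l p := fun p => (hl_range p).1
  have hl2 : ∀ p, l p ≤ 1 := fun p => (hl_range p).2
  have ha : ∀ p, 0 ≤ av (l p) := by
    intro p; rw [av]; apply div_nonneg <;> [linarith [hl2 p]; linarith [hl1 p]]
  have hbnn : ∀ p : B, (0:ℝ) ≤ f p ^ 2 := fun p => sq_nonneg _
  have hmemD : ∀ q : B × ℝ, q ∈ D ↔ q.2 ∈ Ioo (-1:ℝ) 1 := by
    intro q; rw [hD, Set.mem_prod]; simp
  have hmemZ : ∀ q : B × ℝ, q ∈ D → (q ∈ Z ↔ q.1 ∈ C ∧ l q.1 ≤ q.2) := by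
    intro q hq; rw [hZ]
    exact ⟨fun h => h.2, fun h => ⟨hq, h⟩⟩
  have hbpos : ∀ p : B, p ∉ C → 0 < f p ^ 2 := by
    intro p hp
    have hne : f p ≠ 0 := fun h => hp ((hf_zero p).2 h)
    positivity
  -- positivity condition at time 1 for points outside Z
  have hP1 : ∀ q : B × ℝ, q ∈ D → q ∉ Z →
      (0 < f q.1 ^ 2 ∨ tau (av (l q.1)) (f q.1 ^ 2) q.2 1 < 0) := by
    intro q hq hqZ
    by_cases hc : q.1 ∈ C
    · right
      have hxl : q.2 < l q.1 := by
        by_contra hcon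
        exact hqZ ((hmemZ q hq).2 ⟨hc, by linarith⟩)
      have hb0 : f q.1 ^ 2 = 0 := by rw [(hf_zero q.1).1 hc]; ring
      have hx := (hmemD q).1 hq
      have h1x : (0:ℝ) < 1 + q.2 := by linarith [hx.1]
      have h2x : (0:ℝ) < 1 - q.2 := by linarith [hx.2]
      have hlt : av (l q.1) < (1 - q.2) / (1 + q.2) := by
        rw [av, div_lt_div_iff₀ (by linarith [hl1 q.1]) h1x]
        nlinarith [hl1 q.1]
      rw [tau, hb0]
      nlinarith [hlt]
    · left; exact hbpos _ hc
  -- positivity condition for nonpositive times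
  have hPneg : ∀ q : B × ℝ, q ∈ D → ∀ t : ℝ, t ≤ 0 →
      (0 < f q.1 ^ 2 ∨ tau (av (l q.1)) (f q.1 ^ 2) q.2 t < 0) := by
    intro q hq t ht
    rcases (hbnn q.1).lt_or_eq with hb | hb
    · exact Or.inl hb
    · right
      have hx := (hmemD q).1 hq
      have h1x : (0:ℝ) < 1 + q.2 := by linarith [hx.1]
      have h2x : (0:ℝ) < 1 - q.2 := by linarith [hx.2]
      have hA : (0:ℝ) < (1 - q.2) / (1 + q.2) := div_pos h2x h1x
      have hat : av (l q.1) * t ≤ 0 := mul_nonpos_of_nonneg_of_nonpos (ha q.1) ht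
      rw [tau, ← hb]
      nlinarith
  -- smoothness of the data map
  have hdm : ContMDiff (I.prod 𝓘(ℝ, ℝ)) 𝓘(ℝ, ℝ × ℝ × ℝ) (⊤ : ℕ∞)
      (fun q : B × ℝ => (l q.1, f q.1 ^ 2, q.2)) := by
    have h1 : ContMDiff (I.prod 𝓘(ℝ, ℝ)) 𝓘(ℝ, ℝ) (⊤ : ℕ∞) (fun q : B × ℝ => l q.1) :=
      hl.comp (contMDiff_fst : ContMDiff (I.prod 𝓘(ℝ, ℝ)) I (⊤ : ℕ∞) (Prod.fst : B × ℝ → B))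
    have h2 : ContMDiff (I.prod 𝓘(ℝ, ℝ)) 𝓘(ℝ, ℝ) (⊤ : ℕ∞) (fun q : B × ℝ => f q.1 ^ 2) := by
      have hc := (hf_sm.comp (contMDiff_fst : ContMDiff (I.prod 𝓘(ℝ, ℝ)) I (⊤ : ℕ∞) (Prod.fst : B × ℝ → B)))
      have he : (fun q : B × ℝ => f q.1 ^ 2) = fun q : B × ℝ => f q.1 * f q.1 := by
        funext q; ring
      rw [he]; exact hc.mul hc
    have h3 : ContMDiff (I.prod 𝓘(ℝ, ℝ)) 𝓘(ℝ, ℝ) (⊤ : ℕ∞) (fun q : B × ℝ => q.2) := contMDiff_snd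
    exact h1.prodMk_space (h2.prodMk_space h3)
  -- maps-to and inverse facts
  have hgm : ∀ q : B × ℝ, q ∈ D \ Z →
      ((q.1, Gmap 1 (l q.1, f q.1 ^ 2, q.2)) : B × ℝ) ∈ D := by
    intro q hq
    exact (hmemD _).2 (flw_mem (hbnn q.1) (hP1 q hq.1 hq.2))
  have hg'm : ∀ q : B × ℝ, q ∈ D →
      ((q.1, Gmap (-1) (l q.1, f q.1 ^ 2, q.2)) : B × ℝ) ∈ D \ Z := by
    intro q hq
    have hx := (hmemD q).1 hq
    have h1x : (0:ℝ) < 1 + q.2 := by linarith [hx.1]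
    have h2x : (0:ℝ) < 1 - q.2 := by linarith [hx.2]
    have hmemD' : ((q.1, Gmap (-1) (l q.1, f q.1 ^ 2, q.2)) : B × ℝ) ∈ D :=
      (hmemD _).2 (flw_mem (hbnn q.1) (hPneg q hq (-1) (by norm_num)))
    refine ⟨hmemD', ?_⟩
    intro hZmem
    obtain ⟨hc, hle⟩ := (hmemZ _ hmemD').1 hZmem
    have hb0 : f q.1 ^ 2 = 0 := by rw [(hf_zero q.1).1 hc]; ring
    have hA : 0 < (1 - q.2) / (1 + q.2) := div_pos h2x h1x
    have hτval : tau (av (l q.1)) 0 q.2 (-1)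
        = -((1 - q.2) / (1 + q.2)) - av (l q.1) := by rw [tau]; ring
    have hτ : tau (av (l q.1)) 0 q.2 (-1) < 0 := by
      rw [hτval]; linarith [ha q.1]
    have hy' : Gmap (-1) (l q.1, f q.1 ^ 2, q.2)
        = (1 + tau (av (l q.1)) 0 q.2 (-1)) / (1 - tau (av (l q.1)) 0 q.2 (-1)) := by
      show flw (av (l q.1)) (f q.1 ^ 2) q.2 (-1) = _
      rw [hb0]
      exact flw_b0 hτ
    have hlp1 : (0:ℝ) < 1 + l q.1 := by linarith [hl1 q.1]
    have hmul : av (l q.1) * (1 + l q.1) = 1 - l q.1 := by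
      rw [av]; field_simp
    have hlt : Gmap (-1) (l q.1, f q.1 ^ 2, q.2) < l q.1 := by
      rw [hy', hτval, div_lt_iff₀ (by linarith)]
      nlinarith [mul_pos hA hlp1]
    simp only at hle
    linarith
  have hinv1 : ∀ q : B × ℝ, q ∈ D \ Z →
      Gmap (-1) (l q.1, f q.1 ^ 2, Gmap 1 (l q.1, f q.1 ^ 2, q.2)) = q.2 := by
    intro q hq
    show flw (av (l q.1)) (f q.1 ^ 2)
      (flw (av (l q.1)) (f q.1 ^ 2) q.2 1) (-1) = q.2
    rw [flw_flw (hbnn q.1) (hP1 q hq.1 hq.2)]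
    rw [show (1:ℝ) + -1 = 0 by norm_num]
    exact flw_zero ((hmemD q).1 hq.1) (hbnn q.1)
  have hinv2 : ∀ q : B × ℝ, q ∈ D →
      Gmap 1 (l q.1, f q.1 ^ 2, Gmap (-1) (l q.1, f q.1 ^ 2, q.2)) = q.2 := by
    intro q hq
    show flw (av (l q.1)) (f q.1 ^ 2)
      (flw (av (l q.1)) (f q.1 ^ 2) q.2 (-1)) 1 = q.2
    rw [flw_flw (hbnn q.1) (hPneg q hq (-1) (by norm_num))]
    rw [show (-1:ℝ) + 1 = 0 by norm_num]
    exact flw_zero ((hmemD q).1 hq) (hbnn q.1)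
  have hL : LeftInvOn (fun q : B × ℝ => (q.1, Gmap (-1) (l q.1, f q.1 ^ 2, q.2)))
      (fun q : B × ℝ => (q.1, Gmap 1 (l q.1, f q.1 ^ 2, q.2))) (D \ Z) := by
    intro q hq
    show ((q.1, Gmap (-1) (l q.1, f q.1 ^ 2, Gmap 1 (l q.1, f q.1 ^ 2, q.2))) : B × ℝ) = q
    rw [hinv1 q hq]
  have hR : RightInvOn (fun q : B × ℝ => (q.1, Gmap (-1) (l q.1, f q.1 ^ 2, q.2)))
      (fun q : B × ℝ => (q.1, Gmap 1 (l q.1, f q.1 ^ 2, q.2))) D := by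
    intro q hq
    show ((q.1, Gmap 1 (l q.1, f q.1 ^ 2, Gmap (-1) (l q.1, f q.1 ^ 2, q.2))) : B × ℝ) = q
    rw [hinv2 q hq]
  refine ⟨fun q => Vmap (l q.1, f q.1 ^ 2, q.2), ?_, ?_, ?_, ?_,
    fun q => Gmap 1 (l q.1, f q.1 ^ 2, q.2), ?_, ?_, ?_,
    ⟨fun q => (q.1, Gmap (-1) (l q.1, f q.1 ^ 2, q.2)), ?_, ?_⟩⟩
  · -- smoothness of v
    intro q hq
    apply ContMDiffAt.contMDiffWithinAt
    exact (contDiffAt_Vmap (hl1 q.1) (hbnn q.1) ((hmemD q).1 hq).2).comp_contMDiffAt (hdm q)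
  · -- nonnegativity of v
    intro q hq
    have hx := (hmemD q).1 hq
    exact vf_nonneg (ha q.1) (hbnn q.1)
  · -- (i) existence on [0,1] iff not in Z
    intro q hq
    have hx := (hmemD q).1 hq
    constructor
    · rintro ⟨γ, hγ0, hγ⟩ hqZ
      obtain ⟨hc, hle⟩ := (hmemZ q hq).1 hqZ
      have hb0 : f q.1 = 0 := (hf_zero q.1).1 hc
      refine no_sol hx (hl1 q.1) hle hγ0 ?_
      intro t ht
      have := hγ t ht
      simpa only [Vmap, hb0, zero_pow, ne_eq, OfNat.ofNat_ne_zero, not_false_eq_true]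
        using this
    · intro hqZ
      refine ⟨fun t => flw (av (l q.1)) (f q.1 ^ 2) q.2 t, flw_zero hx (hbnn q.1), ?_⟩
      intro t ht
      have hPt : 0 < f q.1 ^ 2 ∨ tau (av (l q.1)) (f q.1 ^ 2) q.2 t < 0 := by
        rcases hP1 q hq hqZ with h | h
        · exact Or.inl h
        · exact Or.inr (lt_of_le_of_lt (tau_mono (ha q.1) ht.2) h)
      exact ⟨flw_mem (hbnn q.1) hPt, hasDerivAt_flw (ha q.1) (hbnn q.1) hPt⟩
  · -- backward completeness
    intro q hq T hT
    have hx := (hmemD q).1 hq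
    refine ⟨fun t => flw (av (l q.1)) (f q.1 ^ 2) q.2 t, flw_zero hx (hbnn q.1), ?_⟩
    intro t ht
    have hPt := hPneg q hq t ht.2
    exact ⟨flw_mem (hbnn q.1) hPt, hasDerivAt_flw (ha q.1) (hbnn q.1) hPt⟩
  · -- flow reaches g at time 1
    intro q hq
    have hx := (hmemD q).1 hq.1
    refine ⟨fun t => flw (av (l q.1)) (f q.1 ^ 2) q.2 t, flw_zero hx (hbnn q.1), ?_, rfl⟩
    intro t ht
    have hPt : 0 < f q.1 ^ 2 ∨ tau (av (l q.1)) (f q.1 ^ 2) q.2 t < 0 := by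
      rcases hP1 q hq.1 hq.2 with h | h
      · exact Or.inl h
      · exact Or.inr (lt_of_le_of_lt (tau_mono (ha q.1) ht.2) h)
    exact ⟨flw_mem (hbnn q.1) hPt, hasDerivAt_flw (ha q.1) (hbnn q.1) hPt⟩
  · -- smoothness of Ψ on D \ Z
    intro q hq
    apply ContMDiffAt.contMDiffWithinAt
    refine ContMDiffAt.prodMk contMDiffAt_fst ?_
    exact (contDiffAt_Gmap 1 (hl1 q.1) (hbnn q.1) ((hmemD q).1 hq.1)
      (hP1 q hq.1 hq.2)).comp_contMDiffAt (hdm q)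
  · -- BijOn
    exact Set.InvOn.bijOn ⟨hL, hR⟩ (fun q hq => hgm q hq) (fun q hq => hg'm q hq)
  · -- smoothness of Ψ' on D
    intro q hq
    apply ContMDiffAt.contMDiffWithinAt
    refine ContMDiffAt.prodMk contMDiffAt_fst ?_
    exact (contDiffAt_Gmap (-1) (hl1 q.1) (hbnn q.1) ((hmemD q).1 hq)
      (hPneg q hq (-1) (by norm_num))).comp_contMDiffAt (hdm q)
  · -- InvOn
    exact ⟨hL, hR⟩
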